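/- Three-cluster obstruction: let A, B, C ⊂ ℝ² be three closed disks of radius ε/2 centered at the vertices of an equilateral triangle of side length L > 10ε. Let p₁, p₂, …, p_n alternate among the clusters so that consecutive vertices are always in different clusters (pattern A, B, C, B, A, B, C, …). Then for any i < j with j > i + 1, the segment p_ip_j has distance greater than ε to at least one intermediate vertex p_m (i < m < j); i.e., no 'shortcut' link is within distance ε of all skipped vertices. -/

import Mathlib

open Set

abbrev E2 := EuclideanSpace ℝ (Fin 2)

/-- The cluster center assigned to the `k`-th vertex in the alternating pattern
`a, b, c, b, a, b, c, b, …`. -/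
noncomputable def clusterOf (a b c : E2) (k : ℕ) : E2 :=
  if k % 4 = 0 then a else if k % 2 = 1 then b else c

lemma clusterOf_eq0 (a b c : E2) {k : ℕ} (h : k % 4 = 0) : clusterOf a b c k = a := by
  simp [clusterOf, h]

lemma clusterOf_eq1 (a b c : E2) {k : ℕ} (h : k % 4 = 1) : clusterOf a b c k = b := by
  have h0 : ¬ (k % 4 = 0) := by omega
  have h2 : k % 2 = 1 := by omega
  simp [clusterOf, h0, h2]

lemma clusterOf_eq2 (a b c : E2) {k : ℕ} (h : k % 4 = 2) : clusterOf a b c k = c := by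
  have h0 : ¬ (k % 4 = 0) := by omega
  have h2 : ¬ (k % 2 = 1) := by omega
  simp [clusterOf, h0, h2]

lemma clusterOf_eq3 (a b c : E2) {k : ℕ} (h : k % 4 = 3) : clusterOf a b c k = b := by
  have h0 : ¬ (k % 4 = 0) := by omega
  have h2 : k % 2 = 1 := by omega
  simp [clusterOf, h0, h2]

/-- Distance from the third vertex of an equilateral triangle to any point of the
segment joining the other two vertices is at least `4ε` when `L > 10ε`. -/
lemma far_of_third (ε L : ℝ) (hε : 0 < ε) (hL : L > 10 * ε) (u v w : E2)
    (h1 : ‖u - w‖ = L) (h2 : ‖v - w‖ = L) (h3 : ‖u - v‖ = L)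
    (t : ℝ) (ht0 : 0 ≤ t) (ht1 : t ≤ 1) :
    4 * ε ≤ ‖w - ((1 - t) • u + t • v)‖ := by
  have hwu : ‖w - u‖ = L := by rw [norm_sub_rev]; exact h1
  have hwv : ‖w - v‖ = L := by rw [norm_sub_rev]; exact h2
  have hinner : (inner ℝ (w - u) (w - v) : ℝ) = L ^ 2 / 2 := by
    have h := norm_sub_sq_real (w - u) (w - v)
    have he : (w - u) - (w - v) = v - u := by abel
    rw [he] at h
    have hvu : ‖v - u‖ = L := by rw [norm_sub_rev]; exact h3
    rw [hvu, hwu, hwv] at h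
    linarith
  have hx : w - ((1 - t) • u + t • v) = (1 - t) • (w - u) + t • (w - v) := by
    module
  have hsq : 3 / 4 * L ^ 2 ≤ ‖w - ((1 - t) • u + t • v)‖ ^ 2 := by
    rw [hx, norm_add_sq_real, real_inner_smul_left, real_inner_smul_right,
      norm_smul, norm_smul, hinner, hwu, hwv]
    rw [Real.norm_eq_abs, Real.norm_eq_abs, abs_of_nonneg (by linarith : (0:ℝ) ≤ 1 - t),
      abs_of_nonneg ht0]
    nlinarith [sq_nonneg (t - 1 / 2), sq_nonneg L]
  nlinarith [norm_nonneg (w - ((1 - t) • u + t • v)), sq_nonneg (L - 10 * ε),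
    mul_pos hε hε]

/-- When both endpoints lie in the same cluster centered at `u`, any other
cluster center `w` is far from the segment. -/
lemma far_of_same (ε L : ℝ) (hε : 0 < ε) (hL : L > 10 * ε) (u w : E2)
    (h1 : ‖w - u‖ = L) (t : ℝ) (ht0 : 0 ≤ t) (ht1 : t ≤ 1) :
    4 * ε ≤ ‖w - ((1 - t) • u + t • u)‖ := by
  have : (1 - t) • u + t • u = u := by module
  rw [this, h1]; linarith

lemma far_aux (ε : ℝ) (hε : 0 < ε) (pi pj pm ci cj cm : E2)
    (hi : ‖pi - ci‖ ≤ ε / 2) (hj : ‖pj - cj‖ ≤ ε / 2) (hm : ‖pm - cm‖ ≤ ε / 2)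
    (hfar : ∀ t : ℝ, 0 ≤ t → t ≤ 1 → 4 * ε ≤ ‖cm - ((1 - t) • ci + t • cj)‖) :
    Metric.infDist pm (segment ℝ pi pj) > ε := by
  have hne : (segment ℝ pi pj).Nonempty := ⟨pi, left_mem_segment ℝ pi pj⟩
  have key : ∀ x ∈ segment ℝ pi pj, 2 * ε ≤ dist pm x := by
    intro x hx
    rw [segment_eq_image] at hx
    obtain ⟨t, ⟨ht0, ht1⟩, rfl⟩ := hx
    have h4 := hfar t ht0 ht1
    have hxy : ‖((1 - t) • pi + t • pj) - ((1 - t) • ci + t • cj)‖ ≤ ε / 2 := by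
      have heq : ((1 - t) • pi + t • pj) - ((1 - t) • ci + t • cj)
          = (1 - t) • (pi - ci) + t • (pj - cj) := by module
      rw [heq]
      calc ‖(1 - t) • (pi - ci) + t • (pj - cj)‖
          ≤ ‖(1 - t) • (pi - ci)‖ + ‖t • (pj - cj)‖ := norm_add_le _ _
        _ = |1 - t| * ‖pi - ci‖ + |t| * ‖pj - cj‖ := by
            rw [norm_smul, norm_smul, Real.norm_eq_abs, Real.norm_eq_abs]
        _ = (1 - t) * ‖pi - ci‖ + t * ‖pj - cj‖ := by
            rw [abs_of_nonneg (by linarith : (0:ℝ) ≤ 1 - t), abs_of_nonneg ht0]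
        _ ≤ (1 - t) * (ε / 2) + t * (ε / 2) := by
            have ha1 : (1 - t) * ‖pi - ci‖ ≤ (1 - t) * (ε / 2) :=
              mul_le_mul_of_nonneg_left hi (by linarith)
            have ha2 : t * ‖pj - cj‖ ≤ t * (ε / 2) :=
              mul_le_mul_of_nonneg_left hj ht0
            linarith
        _ = ε / 2 := by ring
    have tri : ‖cm - ((1 - t) • ci + t • cj)‖
        ≤ ‖cm - pm‖ + ‖pm - ((1 - t) • pi + t • pj)‖
          + ‖((1 - t) • pi + t • pj) - ((1 - t) • ci + t • cj)‖ := by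
      have : cm - ((1 - t) • ci + t • cj)
          = (cm - pm) + (pm - ((1 - t) • pi + t • pj))
            + (((1 - t) • pi + t • pj) - ((1 - t) • ci + t • cj)) := by abel
      rw [this]; exact norm_add₃_le
    have hcm : ‖cm - pm‖ ≤ ε / 2 := by rw [norm_sub_rev]; exact hm
    rw [dist_eq_norm]
    linarith
  by_contra hcon
  push_neg at hcon
  have hlt : Metric.infDist pm (segment ℝ pi pj) < 2 * ε := by linarith
  obtain ⟨y, hy, hylt⟩ := (Metric.infDist_lt_iff hne).mp hlt
  exact absurd (key y hy) (by linarith)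

/-- Three-cluster obstruction: if the vertices of a polyline alternate among
three clusters of radius `ε/2` centered at the vertices of an equilateral
triangle of side `L > 10ε`, then every shortcut link `p i p j` with `j > i + 1`
is at distance more than `ε` from some skipped vertex. -/
theorem stmt_18 (ε L : ℝ) (hε : 0 < ε) (hL : L > 10 * ε)
    (a b c : E2) (hab : ‖a - b‖ = L) (hbc : ‖b - c‖ = L) (hac : ‖a - c‖ = L)
    (p : ℕ → E2) (hp : ∀ k, ‖p k - clusterOf a b c k‖ ≤ ε / 2) :
    ∀ i j : ℕ, i + 1 < j →
      ∃ m, i < m ∧ m < j ∧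
        Metric.infDist (p m) (segment ℝ (p i) (p j)) > ε := by
  intro i j hij
  have hba : ‖b - a‖ = L := by rw [norm_sub_rev]; exact hab
  have hcb : ‖c - b‖ = L := by rw [norm_sub_rev]; exact hbc
  have hca : ‖c - a‖ = L := by rw [norm_sub_rev]; exact hac
  have key : ∀ m : ℕ, i < m → m < j →
      (∀ t : ℝ, 0 ≤ t → t ≤ 1 →
        4 * ε ≤ ‖clusterOf a b c m -
          ((1 - t) • clusterOf a b c i + t • clusterOf a b c j)‖) →
      ∃ m, i < m ∧ m < j ∧
        Metric.infDist (p m) (segment ℝ (p i) (p j)) > ε := by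
    intro m h1 h2 h3
    exact ⟨m, h1, h2, far_aux ε hε _ _ _ _ _ _ (hp i) (hp j) (hp m) h3⟩
  have hi4 : i % 4 = 0 ∨ i % 4 = 1 ∨ i % 4 = 2 ∨ i % 4 = 3 := by omega
  have hj4 : j % 4 = 0 ∨ j % 4 = 1 ∨ j % 4 = 2 ∨ j % 4 = 3 := by omega
  rcases hi4 with hi0 | hi1 | hi2 | hi3 <;> rcases hj4 with hj0 | hj1 | hj2 | hj3
  · -- (0,0) : a, a ; m = i+1 (b)
    refine key (i + 1) (by omega) (by omega) ?_
    rw [clusterOf_eq0 a b c hi0, clusterOf_eq0 a b c hj0,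
      clusterOf_eq1 a b c (show (i + 1) % 4 = 1 by omega)]
    exact far_of_same ε L hε hL a b hba
  · -- (0,1) : a, b ; m = i+2 (c)
    refine key (i + 2) (by omega) (by omega) ?_
    rw [clusterOf_eq0 a b c hi0, clusterOf_eq1 a b c hj1,
      clusterOf_eq2 a b c (show (i + 2) % 4 = 2 by omega)]
    exact far_of_third ε L hε hL a b c hac hbc hab
  · -- (0,2) : a, c ; m = i+1 (b)
    refine key (i + 1) (by omega) (by omega) ?_
    rw [clusterOf_eq0 a b c hi0, clusterOf_eq2 a b c hj2,
      clusterOf_eq1 a b c (show (i + 1) % 4 = 1 by omega)]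
    exact far_of_third ε L hε hL a c b hab hcb hac
  · -- (0,3) : a, b ; m = i+2 (c)
    refine key (i + 2) (by omega) (by omega) ?_
    rw [clusterOf_eq0 a b c hi0, clusterOf_eq3 a b c hj3,
      clusterOf_eq2 a b c (show (i + 2) % 4 = 2 by omega)]
    exact far_of_third ε L hε hL a b c hac hbc hab
  · -- (1,0) : b, a ; m = i+1 (c)
    refine key (i + 1) (by omega) (by omega) ?_
    rw [clusterOf_eq1 a b c hi1, clusterOf_eq0 a b c hj0,
      clusterOf_eq2 a b c (show (i + 1) % 4 = 2 by omega)]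
    exact far_of_third ε L hε hL b a c hbc hac hba
  · -- (1,1) : b, b ; m = i+1 (c)
    refine key (i + 1) (by omega) (by omega) ?_
    rw [clusterOf_eq1 a b c hi1, clusterOf_eq1 a b c hj1,
      clusterOf_eq2 a b c (show (i + 1) % 4 = 2 by omega)]
    exact far_of_same ε L hε hL b c hcb
  · -- (1,2) : b, c ; m = i+3 (a)
    refine key (i + 3) (by omega) (by omega) ?_
    rw [clusterOf_eq1 a b c hi1, clusterOf_eq2 a b c hj2,
      clusterOf_eq0 a b c (show (i + 3) % 4 = 0 by omega)]
    exact far_of_third ε L hε hL b c a hba hca hbc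
  · -- (1,3) : b, b ; m = i+1 (c)
    refine key (i + 1) (by omega) (by omega) ?_
    rw [clusterOf_eq1 a b c hi1, clusterOf_eq3 a b c hj3,
      clusterOf_eq2 a b c (show (i + 1) % 4 = 2 by omega)]
    exact far_of_same ε L hε hL b c hcb
  · -- (2,0) : c, a ; m = i+1 (b)
    refine key (i + 1) (by omega) (by omega) ?_
    rw [clusterOf_eq2 a b c hi2, clusterOf_eq0 a b c hj0,
      clusterOf_eq3 a b c (show (i + 1) % 4 = 3 by omega)]
    exact far_of_third ε L hε hL c a b hcb hab hca
  · -- (2,1) : c, b ; m = i+2 (a)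
    refine key (i + 2) (by omega) (by omega) ?_
    rw [clusterOf_eq2 a b c hi2, clusterOf_eq1 a b c hj1,
      clusterOf_eq0 a b c (show (i + 2) % 4 = 0 by omega)]
    exact far_of_third ε L hε hL c b a hca hba hcb
  · -- (2,2) : c, c ; m = i+1 (b)
    refine key (i + 1) (by omega) (by omega) ?_
    rw [clusterOf_eq2 a b c hi2, clusterOf_eq2 a b c hj2,
      clusterOf_eq3 a b c (show (i + 1) % 4 = 3 by omega)]
    exact far_of_same ε L hε hL c b hbc
  · -- (2,3) : c, b ; m = i+2 (a)
    refine key (i + 2) (by omega) (by omega) ?_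
    rw [clusterOf_eq2 a b c hi2, clusterOf_eq3 a b c hj3,
      clusterOf_eq0 a b c (show (i + 2) % 4 = 0 by omega)]
    exact far_of_third ε L hε hL c b a hca hba hcb
  · -- (3,0) : b, a ; m = i+3 (c)
    refine key (i + 3) (by omega) (by omega) ?_
    rw [clusterOf_eq3 a b c hi3, clusterOf_eq0 a b c hj0,
      clusterOf_eq2 a b c (show (i + 3) % 4 = 2 by omega)]
    exact far_of_third ε L hε hL b a c hbc hac hba
  · -- (3,1) : b, b ; m = i+1 (a)
    refine key (i + 1) (by omega) (by omega) ?_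
    rw [clusterOf_eq3 a b c hi3, clusterOf_eq1 a b c hj1,
      clusterOf_eq0 a b c (show (i + 1) % 4 = 0 by omega)]
    exact far_of_same ε L hε hL b a hab
  · -- (3,2) : b, c ; m = i+1 (a)
    refine key (i + 1) (by omega) (by omega) ?_
    rw [clusterOf_eq3 a b c hi3, clusterOf_eq2 a b c hj2,
      clusterOf_eq0 a b c (show (i + 1) % 4 = 0 by omega)]
    exact far_of_third ε L hε hL b c a hba hca hbc
  · -- (3,3) : b, b ; m = i+1 (a)
    refine key (i + 1) (by omega) (by omega) ?_
    rw [clusterOf_eq3 a b c hi3, clusterOf_eq3 a b c hj3,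
      clusterOf_eq0 a b c (show (i + 1) % 4 = 0 by omega)]
    exact far_of_same ε L hε hL b a hab
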